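/- Let D₁, …, D_b be n×n real symmetric positive definite matrices and c > 0. Then (1/b)·∑ᵢ (I + c·Dᵢ)⁻¹ − (I + (c/b)·∑ᵢ Dᵢ)⁻¹ is positive semidefinite. -/

import Mathlib

open Matrix

private lemma sum_mulVec' {n b : ℕ} (A : Fin b → Matrix (Fin n) (Fin n) ℝ) (x : Fin n → ℝ) :
    (∑ i, A i) *ᵥ x = ∑ i, (A i) *ᵥ x := by
  ext j
  simp only [mulVec, dotProduct, Finset.sum_apply, Matrix.sum_apply, Finset.sum_mul]
  exact Finset.sum_comm

private lemma dot_sum' {n b : ℕ} (x : Fin n → ℝ) (w : Fin b → Fin n → ℝ) :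
    x ⬝ᵥ (∑ i, w i) = ∑ i, x ⬝ᵥ w i := by
  simp only [dotProduct, Finset.sum_apply, Finset.mul_sum]
  exact Finset.sum_comm

private lemma herm_smul {n : ℕ} {M : Matrix (Fin n) (Fin n) ℝ} (h : M.IsHermitian)
    (a : ℝ) : (a • M).IsHermitian := by
  have : (a • M)ᴴ = a • Mᴴ := by
    rw [conjTranspose_smul]
    simp
  unfold Matrix.IsHermitian
  rw [this, h.eq]

private lemma herm_sum {n b : ℕ} (A : Fin b → Matrix (Fin n) (Fin n) ℝ)
    (h : ∀ i, (A i).IsHermitian) : (∑ i, A i).IsHermitian := by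
  apply Matrix.IsHermitian.ext
  intro i j
  simp only [Matrix.sum_apply, star_sum]
  exact Finset.sum_congr rfl fun k _ => (h k).apply i j

private lemma psd_smul {n : ℕ} {M : Matrix (Fin n) (Fin n) ℝ} (h : M.PosSemidef)
    {a : ℝ} (ha : 0 ≤ a) : (a • M).PosSemidef := by
  refine PosSemidef.of_dotProduct_mulVec_nonneg (herm_smul h.1 a) fun x => ?_
  have := h.dotProduct_mulVec_nonneg x
  simp only [smul_mulVec, dotProduct_smul, smul_eq_mul]
  exact mul_nonneg ha this

/-- symmetric matrix moves across the dot product -/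
private lemma herm_dot {n : ℕ} {M : Matrix (Fin n) (Fin n) ℝ} (hM : M.IsHermitian)
    (u v : Fin n → ℝ) : (M *ᵥ u) ⬝ᵥ v = u ⬝ᵥ (M *ᵥ v) := by
  have hT : Mᵀ = M := by
    have := hM.eq
    rwa [conjTranspose_eq_transpose_of_trivial] at this
  rw [dotProduct_mulVec, ← mulVec_transpose, hT, dotProduct_comm]

/-- the key scalar inequality: `2⟨y,x⟩ - ⟨y,Ay⟩ ≤ ⟨x,A⁻¹x⟩` for `A` positive definite. -/
private lemma key_ineq {n : ℕ} {A : Matrix (Fin n) (Fin n) ℝ} (hA : A.PosDef)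
    (x y : Fin n → ℝ) : 2 * (y ⬝ᵥ x) - y ⬝ᵥ (A *ᵥ y) ≤ x ⬝ᵥ (A⁻¹ *ᵥ x) := by
  have hu : IsUnit A.det := (Matrix.isUnit_iff_isUnit_det A).mp hA.isUnit
  have h1 : A *ᵥ (A⁻¹ *ᵥ x) = x := by
    rw [mulVec_mulVec, Matrix.mul_nonsing_inv A hu, one_mulVec]
  have h2 : A⁻¹ *ᵥ (A *ᵥ y) = y := by
    rw [mulVec_mulVec, Matrix.nonsing_inv_mul A hu, one_mulVec]
  set z : Fin n → ℝ := A⁻¹ *ᵥ x - y with hz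
  have h0 : 0 ≤ z ⬝ᵥ (A *ᵥ z) := by simpa using hA.posSemidef.dotProduct_mulVec_nonneg z
  have hAz : A *ᵥ z = x - A *ᵥ y := by rw [hz, mulVec_sub, h1]
  have expand : z ⬝ᵥ (A *ᵥ z)
      = x ⬝ᵥ (A⁻¹ *ᵥ x) - 2 * (y ⬝ᵥ x) + y ⬝ᵥ (A *ᵥ y) := by
    rw [hAz, hz, sub_dotProduct, dotProduct_sub, dotProduct_sub]
    have t1 : (A⁻¹ *ᵥ x) ⬝ᵥ x = x ⬝ᵥ (A⁻¹ *ᵥ x) := dotProduct_comm _ _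
    have t2 : (A⁻¹ *ᵥ x) ⬝ᵥ (A *ᵥ y) = x ⬝ᵥ y := by
      rw [herm_dot hA.inv.1 x (A *ᵥ y), h2]
    have t3 : x ⬝ᵥ y = y ⬝ᵥ x := dotProduct_comm _ _
    rw [t1, t2, t3]
    ring
  linarith

private lemma avg_general {n b : ℕ} (hb : 1 ≤ b) (A : Fin b → Matrix (Fin n) (Fin n) ℝ)
    (hA : ∀ i, (A i).PosDef) :
    (((b : ℝ)⁻¹) • ∑ i, (A i)⁻¹ - (((b : ℝ)⁻¹) • ∑ i, A i)⁻¹).PosSemidef := by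
  have hbpos : (0 : ℝ) < (b : ℝ) := by exact_mod_cast hb
  have hbne : (b : ℝ) ≠ 0 := ne_of_gt hbpos
  have hne : (Finset.univ : Finset (Fin b)).Nonempty := by
    have : Nonempty (Fin b) := Fin.pos_iff_nonempty.mp hb
    exact Finset.univ_nonempty
  set S : Matrix (Fin n) (Fin n) ℝ := ((b : ℝ)⁻¹) • ∑ i, A i with hSdef
  -- S is positive definite
  have hSherm : S.IsHermitian := herm_smul (herm_sum _ fun i => (hA i).1) _
  have hS : S.PosDef := by
    refine PosDef.of_dotProduct_mulVec_pos hSherm fun x hx => ?_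
    have hq : (star x) ⬝ᵥ (S *ᵥ x) = (b : ℝ)⁻¹ * ∑ i, x ⬝ᵥ (A i *ᵥ x) := by
      simp only [hSdef, smul_mulVec, star_trivial, dotProduct_smul, smul_eq_mul,
        sum_mulVec', dot_sum']
    rw [hq]
    apply mul_pos (inv_pos.mpr hbpos)
    apply Finset.sum_pos (fun i _ => ?_) hne
    simpa using (hA i).dotProduct_mulVec_pos hx
  have hSu : IsUnit S.det := (Matrix.isUnit_iff_isUnit_det S).mp hS.isUnit
  -- Hermitian part
  have hherm : (((b : ℝ)⁻¹) • ∑ i, (A i)⁻¹ - S⁻¹).IsHermitian := by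
    apply Matrix.IsHermitian.sub
    · exact herm_smul (herm_sum _ fun i => (hA i).inv.1) _
    · exact hS.inv.1
  refine PosSemidef.of_dotProduct_mulVec_nonneg hherm fun x => ?_
  set y : Fin n → ℝ := S⁻¹ *ᵥ x with hy
  have hSy : S *ᵥ y = x := by
    rw [hy, mulVec_mulVec, Matrix.mul_nonsing_inv S hSu, one_mulVec]
  -- x ⬝ S⁻¹ x = 2⟨y,x⟩ - ⟨y,Sy⟩
  have hid : x ⬝ᵥ (S⁻¹ *ᵥ x) = 2 * (y ⬝ᵥ x) - y ⬝ᵥ (S *ᵥ y) := by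
    have hyx : y ⬝ᵥ x = x ⬝ᵥ (S⁻¹ *ᵥ x) := dotProduct_comm _ _
    rw [hSy, hyx]
    ring
  -- ⟨y,Sy⟩ as average
  have hySy : y ⬝ᵥ (S *ᵥ y) = (b : ℝ)⁻¹ * ∑ i, y ⬝ᵥ (A i *ᵥ y) := by
    simp only [hSdef, smul_mulVec, dotProduct_smul, smul_eq_mul, sum_mulVec', dot_sum']
  have hconst : (2 : ℝ) * (y ⬝ᵥ x) = (b : ℝ)⁻¹ * ∑ _i : Fin b, 2 * (y ⬝ᵥ x) := by
    rw [Finset.sum_const, Finset.card_univ, Fintype.card_fin, nsmul_eq_mul]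
    field_simp
  have hle : x ⬝ᵥ (S⁻¹ *ᵥ x) ≤ (b : ℝ)⁻¹ * ∑ i, x ⬝ᵥ ((A i)⁻¹ *ᵥ x) := by
    rw [hid, hySy, hconst, ← mul_sub, ← Finset.sum_sub_distrib]
    apply mul_le_mul_of_nonneg_left _ (inv_nonneg.mpr hbpos.le)
    exact Finset.sum_le_sum fun i _ => key_ineq (hA i) x y
  have hrhs : (star x) ⬝ᵥ ((((b : ℝ)⁻¹) • ∑ i, (A i)⁻¹ - S⁻¹) *ᵥ x)
      = (b : ℝ)⁻¹ * ∑ i, x ⬝ᵥ ((A i)⁻¹ *ᵥ x) - x ⬝ᵥ (S⁻¹ *ᵥ x) := by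
    simp only [star_trivial, sub_mulVec, dotProduct_sub, smul_mulVec, dotProduct_smul,
      smul_eq_mul, sum_mulVec', dot_sum']
  rw [hrhs]
  linarith

theorem avg_inv_sub_inv_avg_posSemidef {n b : ℕ} (hb : 1 ≤ b)
    (D : Fin b → Matrix (Fin n) (Fin n) ℝ) (hD : ∀ i, (D i).PosDef)
    (c : ℝ) (hc : 0 < c) :
    (((b : ℝ)⁻¹) • (∑ i, (1 + c • D i)⁻¹) - (1 + (c / b) • ∑ i, D i)⁻¹).PosSemidef := by
  have hbne : (b : ℝ) ≠ 0 := by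
    have : (0 : ℝ) < (b : ℝ) := by exact_mod_cast hb
    exact ne_of_gt this
  have hA : ∀ i, (1 + c • D i).PosDef := fun i => by
    have h1 : (1 : Matrix (Fin n) (Fin n) ℝ).PosDef := Matrix.PosDef.one
    have h2 : (c • D i).PosSemidef := psd_smul (hD i).posSemidef hc.le
    exact h1.add_posSemidef h2
  have hEq : (1 + (c / b) • ∑ i, D i) = ((b : ℝ)⁻¹) • ∑ i, (1 + c • D i) := by
    rw [Finset.sum_add_distrib, ← Finset.smul_sum, Finset.sum_const, Finset.card_univ,
      Fintype.card_fin, smul_add, smul_smul, ← Nat.cast_smul_eq_nsmul ℝ, smul_smul,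
      inv_mul_cancel₀ hbne, one_smul]
    congr 1
    rw [div_eq_inv_mul]
  rw [hEq]
  exact avg_general hb _ hA
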